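/- Let C(x) = Σ_{n≥0} Cat(n) x^n = (1−√(1−4x))/(2x) be the Catalan generating function, and b_{n,m,0} = (n+m)!·(n−m+1)/(m!·(n+1)!). Then Σ_{0≤m≤n} b_{n,m,0} x^n y^m = (1 − y·C(xy))/(1 − x − y) as formal power series. -/

import Mathlib

open Nat

lemma cat_cast (k : ℕ) : (catalan k : ℚ) = ((2 * k)! : ℚ) / ((k ! : ℚ) * ((k + 1)! : ℚ)) := by
  have h := succ_mul_catalan_eq_centralBinom k
  have h2 : ((k + 1 : ℕ) : ℚ) * (catalan k : ℚ) = (Nat.centralBinom k : ℚ) := by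
    exact_mod_cast congrArg (Nat.cast : ℕ → ℚ) h
  have hc : (Nat.centralBinom k : ℚ) = ((2 * k)! : ℚ) / ((k ! : ℚ) * (k ! : ℚ)) := by
    rw [Nat.centralBinom, Nat.cast_choose ℚ (by omega : k ≤ 2 * k)]
    have : 2 * k - k = k := by omega
    rw [this]
  have hk : ((k + 1 : ℕ) : ℚ) ≠ 0 := by positivity
  have hfac : ((k + 1)! : ℚ) = (k + 1 : ℕ) * (k ! : ℚ) := by
    rw [Nat.factorial_succ]; push_cast; ring
  field_simp [hfac] at h2 ⊢
  rw [hc] at h2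
  field_simp at h2
  linear_combination h2 + ((catalan k : ℚ) * (k ! : ℚ)) * hfac

lemma cX (F : MvPowerSeries (Fin 2) ℚ) (s : Fin 2) (d : Fin 2 →₀ ℕ) :
    MvPowerSeries.coeff d (MvPowerSeries.X s * F) =
      if Finsupp.single s 1 ≤ d then MvPowerSeries.coeff (d - Finsupp.single s 1) F else 0 := by
  rw [MvPowerSeries.X_def, MvPowerSeries.coeff_monomial_mul]
  split_ifs <;> simp

lemma le0succ (n m : ℕ) :
    Finsupp.single (0 : Fin 2) 1 ≤ Finsupp.single (0 : Fin 2) (n + 1) + Finsupp.single 1 m := by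
  rw [Finsupp.le_def]; intro i; fin_cases i <;> simp

lemma nle0 (m : ℕ) :
    ¬ Finsupp.single (0 : Fin 2) 1 ≤ Finsupp.single (0 : Fin 2) 0 + Finsupp.single 1 m := by
  intro h
  have := Finsupp.le_def.mp h 0
  simp at this

lemma le1succ (n m : ℕ) :
    Finsupp.single (1 : Fin 2) 1 ≤ Finsupp.single (0 : Fin 2) n + Finsupp.single 1 (m + 1) := by
  rw [Finsupp.le_def]; intro i; fin_cases i <;> simp

lemma nle1 (n : ℕ) :
    ¬ Finsupp.single (1 : Fin 2) 1 ≤ Finsupp.single (0 : Fin 2) n + Finsupp.single 1 0 := by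
  intro h
  have := Finsupp.le_def.mp h 1
  simp at this

lemma sub0 (n m : ℕ) :
    (Finsupp.single (0 : Fin 2) (n + 1) + Finsupp.single 1 m) - Finsupp.single 0 1 =
      Finsupp.single (0 : Fin 2) n + Finsupp.single 1 m := by
  ext i; fin_cases i <;> simp [Finsupp.tsub_apply]

lemma sub1 (n m : ℕ) :
    (Finsupp.single (0 : Fin 2) n + Finsupp.single 1 (m + 1)) - Finsupp.single 1 1 =
      Finsupp.single (0 : Fin 2) n + Finsupp.single 1 m := by
  ext i; fin_cases i <;> simp [Finsupp.tsub_apply]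

lemma eq0iff (n m : ℕ) :
    Finsupp.single (0 : Fin 2) n + Finsupp.single 1 m = 0 ↔ n = 0 ∧ m = 0 := by
  constructor
  · intro h
    constructor
    · have := Finsupp.ext_iff.mp h 0; simpa using this
    · have := Finsupp.ext_iff.mp h 1; simpa using this
  · rintro ⟨rfl, rfl⟩; simp

/-- `∑_{0 ≤ m ≤ n} b_{n,m,0} x^n y^m = (1 - y·C(xy)) / (1 - x - y)` as formal
power series, where `b_{n,m,0} = (n+m)!(n-m+1)/(m!(n+1)!)` and `C` is the
Catalan generating function; stated in cleared-denominator form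
`(1 - x - y) * F = 1 - G` with `G = y·C(xy)`. -/
theorem stmt14 (F G : MvPowerSeries (Fin 2) ℚ)
    (hF : ∀ n m : ℕ,
      MvPowerSeries.coeff (Finsupp.single 0 n + Finsupp.single 1 m) F =
        if m ≤ n then ((n + m)! : ℚ) * ((n : ℚ) - m + 1) / ((m ! : ℚ) * ((n + 1)! : ℚ))
        else 0)
    (hG : ∀ n m : ℕ,
      MvPowerSeries.coeff (Finsupp.single 0 n + Finsupp.single 1 m) G =
        if m = n + 1 then (catalan n : ℚ) else 0) :
    (1 - MvPowerSeries.X 0 - MvPowerSeries.X 1) * F = 1 - G := by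
  classical
  ext d
  obtain ⟨n, m, rfl⟩ : ∃ n m, d = Finsupp.single 0 n + Finsupp.single 1 m := by
    refine ⟨d 0, d 1, ?_⟩
    ext i; fin_cases i <;> simp
  simp only [sub_mul, one_mul, map_sub, cX, MvPowerSeries.coeff_one]
  rcases n with _ | N <;> rcases m with _ | M
  · rw [if_neg (nle0 0), if_neg (nle1 0), if_pos (by rw [eq0iff]; omega), hF, hG]
    norm_num
  · rw [if_neg (nle0 (M + 1)), if_pos (le1succ 0 M), sub1, if_neg (by rw [eq0iff]; omega),
      hF, hF, hG]
    rcases Nat.eq_zero_or_pos M with rfl | hM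
    · norm_num
    · rw [if_neg (by omega), if_neg (by omega), if_neg (by omega)]
      norm_num
  · rw [if_pos (le0succ N 0), if_neg (nle1 (N + 1)), sub0, if_neg (by rw [eq0iff]; omega),
      hF, hF, hG]
    rw [if_pos (by omega), if_pos (by omega), if_neg (by omega)]
    have hE : ((N + 1 + 1)! : ℚ) = (N + 2) * ((N + 1)! : ℚ) := by
      rw [Nat.factorial_succ]; push_cast; ring
    have h1 : ((N + 1 + 0)! : ℚ) = ((N + 1)! : ℚ) := by norm_num
    have h2 : ((N + 0)! : ℚ) = (N ! : ℚ) := by norm_num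
    have h3 : ((N + 1)! : ℚ) = (N + 1) * (N ! : ℚ) := by
      rw [Nat.factorial_succ]; push_cast; ring
    rw [hE, h1, h2, h3]
    have hN : (N ! : ℚ) ≠ 0 := by positivity
    field_simp
    push_cast
    ring
  · rw [if_pos (le0succ N (M + 1)), if_pos (le1succ (N + 1) M), sub0, sub1,
      if_neg (by rw [eq0iff]; omega), hF, hF, hF, hG]
    have hA : (N + 1 + (M + 1))! = (N + M + 2) * ((N + M + 1) * (N + M)!) := by
      have h : N + 1 + (M + 1) = (N + M) + 1 + 1 := by omega
      rw [h, Nat.factorial_succ, Nat.factorial_succ]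
    have hB : (N + (M + 1))! = (N + M + 1) * (N + M)! := by
      have h : N + (M + 1) = (N + M) + 1 := by omega
      rw [h, Nat.factorial_succ]
    have hC : (N + 1 + M)! = (N + M + 1) * (N + M)! := by
      have h : N + 1 + M = (N + M) + 1 := by omega
      rw [h, Nat.factorial_succ]
    have hD : (M + 1)! = (M + 1) * M ! := Nat.factorial_succ M
    have hE : (N + 1 + 1)! = (N + 2) * (N + 1)! := by
      have h : N + 1 + 1 = (N + 1) + 1 := by omega
      rw [h, Nat.factorial_succ]
    have hNM : ((N + M)! : ℚ) ≠ 0 := by positivity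
    have hM0 : ((M)! : ℚ) ≠ 0 := by positivity
    have hN1 : (((N + 1))! : ℚ) ≠ 0 := by positivity
    split_ifs with c1 c2 c3 c4 c5 c6 c7 c8 c9 c10 <;> try (exfalso; omega)
    · -- generic: M + 1 ≤ N
      rw [hA, hB, hC, hD, hE]
      push_cast
      field_simp
      ring
    · -- M = N
      have hMN : M = N := by omega
      subst hMN
      rw [hA, hC, hD, hE]
      push_cast
      field_simp
      ring
    · -- M = N + 1, catalan case
      have hMN : M = N + 1 := by omega
      subst hMN
      rw [hC, hD, cat_cast]
      have h2n : (2 * (N + 1))! = (2 * N + 2) * ((2 * N + 1) * (2 * N)!) := by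
        have h : 2 * (N + 1) = (2 * N) + 1 + 1 := by omega
        rw [h, Nat.factorial_succ, Nat.factorial_succ]
      have e : N + (N + 1) = 2 * N + 1 := by omega
      rw [e, Nat.factorial_succ (2 * N), h2n, hD]
      have h2N : ((2 * N)! : ℚ) ≠ 0 := by positivity
      push_cast
      field_simp
      ring
    · -- all zero
      norm_num
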